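/- arXiv:1212.1602 — 3 statements merged into one kernel-verified Lean document; each statement's English description precedes it below -/
import Mathlib

section
/- Let b>0 and u,v : [0,∞) → ℝ be in H^1 with u(0)=v(0)=0 and finite weighted norms. Then the sup over ξ ≥ 0 of (u(ξ)^2 + v(ξ)^2) e^{2bξ} is at most (2+2b) ‖(u,v)‖_{L^2_b} ‖(u,v)‖_{H^1_b}, where ‖(u,v)‖_{L^2_b}^2 = ∫_0^∞ (u^2+v^2) e^{2bx} dx and ‖(u,v)‖_{H^1_b}^2 = ∫_0^∞ (u^2+v^2+u_x^2+v_x^2) e^{2bx} dx. In particular ‖(u,v) e^{bx}‖_{L^∞} ≤ √(2+2b) ‖(u,v)‖_{L^2_b}^{1/2} ‖(u,v)‖_{H^1_b}^{1/2}. -/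
set_option maxHeartbeats 1000000
open MeasureTheory Real Set Filter Topology

lemma cs_pt (a b c d : ℝ) : |a*c| + |b*d| ≤ Real.sqrt (a^2+b^2) * Real.sqrt (c^2+d^2) := by
  rw [← Real.sqrt_mul (by positivity)]
  rw [show |a*c| + |b*d| = Real.sqrt ((|a*c| + |b*d|)^2) from
    (Real.sqrt_sq (by positivity)).symm]
  apply Real.sqrt_le_sqrt
  rw [abs_mul, abs_mul]
  nlinarith [sq_nonneg (|a| * |d| - |b| * |c|), sq_abs a, sq_abs b, sq_abs c, sq_abs d,
    abs_nonneg a, abs_nonneg b, abs_nonneg c, abs_nonneg d]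

lemma holder_step (b : ℝ) (hb : 0 < b) (u v u' v' : ℝ → ℝ)
    (hcu : Continuous u) (hcv : Continuous v) (hmu' : Measurable u') (hmv' : Measurable v')
    (h1 : IntegrableOn (fun x => ((u x)^2 + (v x)^2) * Real.exp (2*b*x)) (Set.Ioi 0))
    (h2 : IntegrableOn (fun x => ((u' x)^2 + (v' x)^2) * Real.exp (2*b*x)) (Set.Ioi 0)) :
    ∫ x in Ioi (0:ℝ), (|u x * u' x| + |v x * v' x|) * Real.exp (2*b*x)
      ≤ Real.sqrt (∫ x in Ioi (0:ℝ), ((u x)^2+(v x)^2) * Real.exp (2*b*x)) *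
        Real.sqrt (∫ x in Ioi (0:ℝ), ((u' x)^2+(v' x)^2) * Real.exp (2*b*x)) := by
  set μ := volume.restrict (Ioi (0:ℝ)) with hμ
  set f : ℝ → ℝ := fun x => Real.sqrt ((u x)^2+(v x)^2) * Real.exp (b*x) with hf
  set g : ℝ → ℝ := fun x => Real.sqrt ((u' x)^2+(v' x)^2) * Real.exp (b*x) with hg
  have hee : ∀ x, Real.exp (b*x) ^ 2 = Real.exp (2*b*x) := by
    intro x
    rw [sq, ← Real.exp_add]
    ring_nf
  have hfsq : ∀ x, f x ^ 2 = ((u x)^2+(v x)^2) * Real.exp (2*b*x) := by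
    intro x
    rw [hf, mul_pow, Real.sq_sqrt (by positivity), hee]
  have hgsq : ∀ x, g x ^ 2 = ((u' x)^2+(v' x)^2) * Real.exp (2*b*x) := by
    intro x
    rw [hg, mul_pow, Real.sq_sqrt (by positivity), hee]
  have hfm : Measurable f := by
    apply Measurable.mul
    · exact (Real.continuous_sqrt.measurable).comp
        ((hcu.measurable.pow_const 2).add (hcv.measurable.pow_const 2))
    · exact Real.measurable_exp.comp (measurable_const.mul measurable_id)
  have hgm : Measurable g := by
    apply Measurable.mul
    · exact (Real.continuous_sqrt.measurable).comp
        ((hmu'.pow_const 2).add (hmv'.pow_const 2))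
    · exact Real.measurable_exp.comp (measurable_const.mul measurable_id)
  have hfL : MemLp f (ENNReal.ofReal 2) μ := by
    rw [show ENNReal.ofReal (2:ℝ) = 2 by norm_num]
    refine (memLp_two_iff_integrable_sq hfm.aestronglyMeasurable).2 ?_
    have : (fun a => f a ^ 2) = fun x => ((u x)^2+(v x)^2) * Real.exp (2*b*x) :=
      funext hfsq
    rw [this]; exact h1
  have hgL : MemLp g (ENNReal.ofReal 2) μ := by
    rw [show ENNReal.ofReal (2:ℝ) = 2 by norm_num]
    refine (memLp_two_iff_integrable_sq hgm.aestronglyMeasurable).2 ?_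
    have : (fun a => g a ^ 2) = fun x => ((u' x)^2+(v' x)^2) * Real.exp (2*b*x) :=
      funext hgsq
    rw [this]; exact h2
  have hpq : Real.HolderConjugate 2 2 := Real.HolderConjugate.two_two
  have hH := MeasureTheory.integral_mul_le_Lp_mul_Lq_of_nonneg hpq
    (ae_of_all μ (fun x => by positivity : ∀ x, 0 ≤ f x))
    (ae_of_all μ (fun x => by positivity : ∀ x, 0 ≤ g x)) hfL hgL
  simp only [Real.rpow_two, ← Real.sqrt_eq_rpow] at hH
  have hfg_int : Integrable (fun x => f x * g x) μ := by
    refine Integrable.mono (h1.add h2) (hfm.mul hgm).aestronglyMeasurable (ae_of_all _ ?_)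
    intro x
    have h1' : f x * g x ≤ (((u x)^2+(v x)^2) * Real.exp (2*b*x) +
        ((u' x)^2+(v' x)^2) * Real.exp (2*b*x)) / 2 := by
      have := sq_nonneg (f x - g x)
      nlinarith [hfsq x, hgsq x]
    have h2' : 0 ≤ f x * g x := by positivity
    have h3' : 0 ≤ ((u x)^2+(v x)^2) * Real.exp (2*b*x) +
        ((u' x)^2+(v' x)^2) * Real.exp (2*b*x) := by positivity
    simp only [Real.norm_eq_abs, abs_of_nonneg h2', Pi.add_apply, abs_of_nonneg h3']
    linarith
  have hW_int : Integrable (fun x => (|u x * u' x| + |v x * v' x|) * Real.exp (2*b*x)) μ := by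
    refine Integrable.mono hfg_int ?_ (ae_of_all _ ?_)
    · refine AEStronglyMeasurable.mul ?_
        (Real.measurable_exp.comp (measurable_const.mul measurable_id)).aestronglyMeasurable
      exact ((hcu.measurable.mul hmu').abs.add (hcv.measurable.mul hmv').abs).aestronglyMeasurable
    · intro x
      have hle : (|u x * u' x| + |v x * v' x|) * Real.exp (2*b*x) ≤ f x * g x := by
        have hc := cs_pt (u x) (v x) (u' x) (v' x)
        have : f x * g x = Real.sqrt ((u x)^2+(v x)^2) * Real.sqrt ((u' x)^2+(v' x)^2) *
            Real.exp (2*b*x) := by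
          rw [hf, hg]; rw [show (2:ℝ)*b*x = b*x + b*x by ring, Real.exp_add]; ring
        rw [this]
        exact mul_le_mul_of_nonneg_right hc (Real.exp_pos _).le
      have h0 : (0:ℝ) ≤ (|u x * u' x| + |v x * v' x|) * Real.exp (2*b*x) := by positivity
      simp only [Real.norm_eq_abs, abs_of_nonneg h0,
        abs_of_nonneg (le_trans h0 hle)]
      exact hle
  calc ∫ x in Ioi (0:ℝ), (|u x * u' x| + |v x * v' x|) * Real.exp (2*b*x)
      ≤ ∫ x, f x * g x ∂μ := by
        refine integral_mono hW_int hfg_int ?_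
        intro x
        dsimp only
        have hc := cs_pt (u x) (v x) (u' x) (v' x)
        have : f x * g x = Real.sqrt ((u x)^2+(v x)^2) * Real.sqrt ((u' x)^2+(v' x)^2) *
            Real.exp (2*b*x) := by
          rw [hf, hg]; rw [show (2:ℝ)*b*x = b*x + b*x by ring, Real.exp_add]; ring
        rw [this]
        exact mul_le_mul_of_nonneg_right hc (Real.exp_pos _).le
    _ ≤ _ := by
        have e1 : ∫ a, f a ^ 2 ∂μ = ∫ x in Ioi (0:ℝ), ((u x)^2+(v x)^2) * Real.exp (2*b*x) :=
          integral_congr_ae (ae_of_all _ fun x => hfsq x)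
        have e2 : ∫ a, g a ^ 2 ∂μ = ∫ x in Ioi (0:ℝ), ((u' x)^2+(v' x)^2) * Real.exp (2*b*x) :=
          integral_congr_ae (ae_of_all _ fun x => hgsq x)
        rw [e1, e2] at hH
        exact hH

lemma W_int (b : ℝ) (hb : 0 < b) (u v u' v' : ℝ → ℝ)
    (hcu : Continuous u) (hcv : Continuous v) (hmu' : Measurable u') (hmv' : Measurable v')
    (h1 : IntegrableOn (fun x => ((u x)^2 + (v x)^2) * Real.exp (2*b*x)) (Set.Ioi 0))
    (h2 : IntegrableOn (fun x => ((u' x)^2 + (v' x)^2) * Real.exp (2*b*x)) (Set.Ioi 0)) :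
    IntegrableOn (fun x => (|u x * u' x| + |v x * v' x|) * Real.exp (2*b*x)) (Set.Ioi 0) := by
  refine Integrable.mono (h1.add h2) ?_ (ae_of_all _ ?_)
  · refine AEStronglyMeasurable.mul ?_
      (Real.measurable_exp.comp (measurable_const.mul measurable_id)).aestronglyMeasurable
    exact ((hcu.measurable.mul hmu').abs.add (hcv.measurable.mul hmv').abs).aestronglyMeasurable
  · intro x
    have h0 : (0:ℝ) ≤ (|u x * u' x| + |v x * v' x|) * Real.exp (2*b*x) := by positivity
    have h3 : (0:ℝ) ≤ ((u x)^2+(v x)^2) * Real.exp (2*b*x) +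
        ((u' x)^2+(v' x)^2) * Real.exp (2*b*x) := by positivity
    simp only [Real.norm_eq_abs, abs_of_nonneg h0, Pi.add_apply, abs_of_nonneg h3]
    have hle : |u x * u' x| + |v x * v' x| ≤ ((u x)^2+(v x)^2) + ((u' x)^2+(v' x)^2) := by
      rw [abs_mul, abs_mul]
      nlinarith [sq_nonneg (|u x| - |u' x|), sq_nonneg (|v x| - |v' x|),
        sq_abs (u x), sq_abs (v x), sq_abs (u' x), sq_abs (v' x)]
    calc (|u x * u' x| + |v x * v' x|) * Real.exp (2*b*x)
        ≤ (((u x)^2+(v x)^2) + ((u' x)^2+(v' x)^2)) * Real.exp (2*b*x) :=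
          mul_le_mul_of_nonneg_right hle (Real.exp_pos _).le
      _ = _ := by ring

theorem stmt_2 (b : ℝ) (hb : 0 < b) (u v u' v' : ℝ → ℝ)
    (hu : ∀ x, HasDerivAt u (u' x) x) (hv : ∀ x, HasDerivAt v (v' x) x)
    (hu0 : u 0 = 0) (hv0 : v 0 = 0)
    (h1 : IntegrableOn (fun x => ((u x)^2 + (v x)^2) * Real.exp (2*b*x)) (Set.Ioi 0))
    (h2 : IntegrableOn (fun x => ((u' x)^2 + (v' x)^2) * Real.exp (2*b*x)) (Set.Ioi 0)) :
    ∀ ξ ≥ (0:ℝ),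
      ((u ξ)^2 + (v ξ)^2) * Real.exp (2*b*ξ) ≤
        (2 + 2*b) *
          Real.sqrt (∫ x in Set.Ioi (0:ℝ), ((u x)^2 + (v x)^2) * Real.exp (2*b*x)) *
          Real.sqrt
            (∫ x in Set.Ioi (0:ℝ),
              ((u x)^2 + (v x)^2 + (u' x)^2 + (v' x)^2) * Real.exp (2*b*x))
      ∧
      Real.sqrt ((u ξ)^2 + (v ξ)^2) * Real.exp (b*ξ) ≤
        Real.sqrt (2 + 2*b) *
          Real.sqrt
            (Real.sqrt (∫ x in Set.Ioi (0:ℝ), ((u x)^2 + (v x)^2) * Real.exp (2*b*x))) *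
          Real.sqrt
            (Real.sqrt
              (∫ x in Set.Ioi (0:ℝ),
                ((u x)^2 + (v x)^2 + (u' x)^2 + (v' x)^2) * Real.exp (2*b*x))) := by
  have hcu : Continuous u := by
    rw [continuous_iff_continuousAt]; exact fun x => (hu x).continuousAt
  have hcv : Continuous v := by
    rw [continuous_iff_continuousAt]; exact fun x => (hv x).continuousAt
  have hmu' : Measurable u' := by
    have : u' = deriv u := funext fun x => ((hu x).deriv).symm
    rw [this]; exact measurable_deriv u
  have hmv' : Measurable v' := by
    have : v' = deriv v := funext fun x => ((hv x).deriv).symm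
    rw [this]; exact measurable_deriv v
  set A := ∫ x in Set.Ioi (0:ℝ), ((u x)^2 + (v x)^2) * Real.exp (2*b*x) with hA
  set C := ∫ x in Set.Ioi (0:ℝ), ((u' x)^2 + (v' x)^2) * Real.exp (2*b*x) with hC
  set T := ∫ x in Set.Ioi (0:ℝ), ((u x)^2 + (v x)^2 + (u' x)^2 + (v' x)^2) * Real.exp (2*b*x)
    with hT
  have hA0 : 0 ≤ A := setIntegral_nonneg measurableSet_Ioi (fun x _ => by positivity)
  have hC0 : 0 ≤ C := setIntegral_nonneg measurableSet_Ioi (fun x _ => by positivity)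
  have hTeq : T = A + C := by
    rw [hT, hA, hC, ← integral_add h1 h2]
    exact integral_congr_ae (ae_of_all _ fun x => by ring)
  set W := ∫ x in Set.Ioi (0:ℝ), (|u x * u' x| + |v x * v' x|) * Real.exp (2*b*x) with hW
  have hW_int := W_int b hb u v u' v' hcu hcv hmu' hmv' h1 h2
  have hWle : W ≤ Real.sqrt A * Real.sqrt C :=
    holder_step b hb u v u' v' hcu hcv hmu' hmv' h1 h2
  set G : ℝ → ℝ := fun x =>
    (2*(u x)*(u' x) + 2*(v x)*(v' x) + 2*b*((u x)^2+(v x)^2)) * Real.exp (2*b*x) with hG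
  set H : ℝ → ℝ := fun x =>
    (2*|u x * u' x| + 2*|v x * v' x| + 2*b*((u x)^2+(v x)^2)) * Real.exp (2*b*x) with hH
  have hGm : Measurable G := by
    apply Measurable.mul ?_ (Real.measurable_exp.comp (measurable_const.mul measurable_id))
    exact (((hcu.measurable.const_mul 2).mul hmu').add
      ((hcv.measurable.const_mul 2).mul hmv')).add
      (((hcu.measurable.pow_const 2).add (hcv.measurable.pow_const 2)).const_mul (2*b))
  have hHm : Measurable H := by
    apply Measurable.mul ?_ (Real.measurable_exp.comp (measurable_const.mul measurable_id))
    exact (((hcu.measurable.mul hmu').abs.const_mul 2).add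
      ((hcv.measurable.mul hmv').abs.const_mul 2)).add
      (((hcu.measurable.pow_const 2).add (hcv.measurable.pow_const 2)).const_mul (2*b))
  have hmaj_int : IntegrableOn
      (fun x => (1+2*b)*(((u x)^2+(v x)^2)*Real.exp (2*b*x)) +
        ((u' x)^2+(v' x)^2)*Real.exp (2*b*x)) (Set.Ioi 0) :=
    (h1.const_mul _).add h2
  have hGbound : ∀ x, ‖G x‖ ≤ ‖(1+2*b)*(((u x)^2+(v x)^2)*Real.exp (2*b*x)) +
      ((u' x)^2+(v' x)^2)*Real.exp (2*b*x)‖ := by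
    intro x
    have hmx : (0:ℝ) ≤ (1+2*b)*(((u x)^2+(v x)^2)*Real.exp (2*b*x)) +
        ((u' x)^2+(v' x)^2)*Real.exp (2*b*x) := by positivity
    rw [Real.norm_eq_abs, Real.norm_eq_abs, abs_of_nonneg hmx, hG]
    rw [abs_mul, abs_of_nonneg (Real.exp_pos _).le]
    have habs : |2*(u x)*(u' x) + 2*(v x)*(v' x) + 2*b*((u x)^2+(v x)^2)|
        ≤ (1+2*b)*((u x)^2+(v x)^2) + ((u' x)^2+(v' x)^2) := by
      rw [abs_le]
      constructor <;>
        nlinarith [sq_nonneg (u x - u' x), sq_nonneg (u x + u' x),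
          sq_nonneg (v x - v' x), sq_nonneg (v x + v' x),
          sq_nonneg (u x), sq_nonneg (v x), hb.le]
    calc |2*(u x)*(u' x) + 2*(v x)*(v' x) + 2*b*((u x)^2+(v x)^2)| * Real.exp (2*b*x)
        ≤ ((1+2*b)*((u x)^2+(v x)^2) + ((u' x)^2+(v' x)^2)) * Real.exp (2*b*x) :=
          mul_le_mul_of_nonneg_right habs (Real.exp_pos _).le
      _ = _ := by ring
  have hHbound : ∀ x, ‖H x‖ ≤ ‖(1+2*b)*(((u x)^2+(v x)^2)*Real.exp (2*b*x)) +
      ((u' x)^2+(v' x)^2)*Real.exp (2*b*x)‖ := by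
    intro x
    have hmx : (0:ℝ) ≤ (1+2*b)*(((u x)^2+(v x)^2)*Real.exp (2*b*x)) +
        ((u' x)^2+(v' x)^2)*Real.exp (2*b*x) := by positivity
    have hHx : (0:ℝ) ≤ H x := by rw [hH]; positivity
    rw [Real.norm_eq_abs, Real.norm_eq_abs, abs_of_nonneg hmx, abs_of_nonneg hHx, hH]
    have habs : 2*|u x * u' x| + 2*|v x * v' x| + 2*b*((u x)^2+(v x)^2)
        ≤ (1+2*b)*((u x)^2+(v x)^2) + ((u' x)^2+(v' x)^2) := by
      rw [abs_mul, abs_mul]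
      nlinarith [sq_nonneg (|u x| - |u' x|), sq_nonneg (|v x| - |v' x|),
        sq_abs (u x), sq_abs (v x), sq_abs (u' x), sq_abs (v' x), hb.le]
    calc (2*|u x * u' x| + 2*|v x * v' x| + 2*b*((u x)^2+(v x)^2)) * Real.exp (2*b*x)
        ≤ ((1+2*b)*((u x)^2+(v x)^2) + ((u' x)^2+(v' x)^2)) * Real.exp (2*b*x) :=
          mul_le_mul_of_nonneg_right habs (Real.exp_pos _).le
      _ = _ := by ring
  have hH_int : IntegrableOn H (Set.Ioi 0) :=
    Integrable.mono hmaj_int hHm.aestronglyMeasurable (ae_of_all _ hHbound)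
  have hFderiv : ∀ x, HasDerivAt (fun y => (u y^2 + v y^2) * Real.exp (2*b*y)) (G x) x := by
    intro x
    have hd1 : HasDerivAt (fun y => u y^2 + v y^2) (2*(u x)*(u' x) + 2*(v x)*(v' x)) x := by
      have := ((hu x).pow 2).add ((hv x).pow 2)
      refine this.congr_deriv ?_; norm_num
    have hd2 : HasDerivAt (fun y => Real.exp (2*b*y)) (2*b*Real.exp (2*b*x)) x := by
      have := ((hasDerivAt_id x).const_mul (2*b)).exp
      simp only [id] at this
      convert this using 1; ring
    have := hd1.mul hd2
    refine this.congr_deriv ?_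
    rw [hG]; ring
  intro ξ hξ
  have hGIoc : IntervalIntegrable G volume 0 ξ := by
    rw [intervalIntegrable_iff_integrableOn_Ioc_of_le hξ]
    exact Integrable.mono (hmaj_int.mono_set Set.Ioc_subset_Ioi_self)
      hGm.aestronglyMeasurable (ae_of_all _ hGbound)
  have hHIoc : IntervalIntegrable H volume 0 ξ := by
    rw [intervalIntegrable_iff_integrableOn_Ioc_of_le hξ]
    exact Integrable.mono (hmaj_int.mono_set Set.Ioc_subset_Ioi_self)
      hHm.aestronglyMeasurable (ae_of_all _ hHbound)
  have step1 : ∫ x in (0:ℝ)..ξ, G x = ((u ξ)^2+(v ξ)^2)*Real.exp (2*b*ξ) := by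
    rw [intervalIntegral.integral_eq_sub_of_hasDerivAt (fun x _ => hFderiv x) hGIoc,
      hu0, hv0]
    norm_num
  have step2 : ∫ x in (0:ℝ)..ξ, G x ≤ ∫ x in (0:ℝ)..ξ, H x := by
    refine intervalIntegral.integral_mono_on hξ hGIoc hHIoc ?_
    intro x _
    rw [hG, hH]
    refine mul_le_mul_of_nonneg_right ?_ (Real.exp_pos _).le
    have := le_abs_self (u x * u' x)
    have := le_abs_self (v x * v' x)
    nlinarith
  have step3 : ∫ x in (0:ℝ)..ξ, H x ≤ ∫ x in Set.Ioi (0:ℝ), H x := by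
    rw [intervalIntegral.integral_of_le hξ]
    refine setIntegral_mono_set hH_int (ae_of_all _ ?_)
      (HasSubset.Subset.eventuallyLE Set.Ioc_subset_Ioi_self)
    intro x
    rw [hH]; positivity
  have step4 : ∫ x in Set.Ioi (0:ℝ), H x = 2*W + 2*b*A := by
    rw [hW, hA]
    rw [show H = fun x => 2*((|u x * u' x| + |v x * v' x|)*Real.exp (2*b*x)) +
        (2*b)*(((u x)^2+(v x)^2)*Real.exp (2*b*x)) from funext fun x => by rw [hH]; ring]
    rw [integral_add (hW_int.const_mul 2) (h1.const_mul (2*b)),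
      integral_const_mul, integral_const_mul]
  have key : ((u ξ)^2 + (v ξ)^2) * Real.exp (2*b*ξ) ≤
      (2 + 2*b) * Real.sqrt A * Real.sqrt T := by
    have hCT : Real.sqrt C ≤ Real.sqrt T := Real.sqrt_le_sqrt (by rw [hTeq]; linarith)
    have hAT : Real.sqrt A ≤ Real.sqrt T := Real.sqrt_le_sqrt (by rw [hTeq]; linarith)
    have hAA : Real.sqrt A * Real.sqrt A = A := Real.mul_self_sqrt hA0
    have hsA : 0 ≤ Real.sqrt A := Real.sqrt_nonneg A
    have hchain : ((u ξ)^2 + (v ξ)^2) * Real.exp (2*b*ξ) ≤ 2*W + 2*b*A := by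
      rw [← step1, ← step4]; exact le_trans step2 step3
    have h1' : W ≤ Real.sqrt A * Real.sqrt T :=
      le_trans hWle (mul_le_mul_of_nonneg_left hCT hsA)
    have h2' : A ≤ Real.sqrt A * Real.sqrt T :=
      hAA.symm.le.trans (mul_le_mul_of_nonneg_left hAT hsA)
    nlinarith [hb.le]
  refine ⟨key, ?_⟩
  have hlhs : Real.sqrt ((u ξ)^2 + (v ξ)^2) * Real.exp (b*ξ)
      = Real.sqrt (((u ξ)^2 + (v ξ)^2) * Real.exp (2*b*ξ)) := by
    rw [Real.sqrt_mul (by positivity),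
      show Real.exp (2*b*ξ) = Real.exp (b*ξ)^2 by rw [sq, ← Real.exp_add]; ring_nf,
      Real.sqrt_sq (Real.exp_nonneg _)]
  have h2b : (0:ℝ) ≤ 2 + 2*b := by linarith
  have hrhs : Real.sqrt ((2 + 2*b) * Real.sqrt A * Real.sqrt T)
      = Real.sqrt (2 + 2*b) * Real.sqrt (Real.sqrt A) * Real.sqrt (Real.sqrt T) := by
    rw [Real.sqrt_mul (by positivity), Real.sqrt_mul h2b]
  rw [hlhs, ← hrhs]
  exact Real.sqrt_le_sqrt key
end

section
/- Let b > 0 and let u : [0,∞) → ℝ be smooth with u(0)=0 and all terms decaying at infinity (u, u_x, u_xx → 0 with the weight e^{2bx}). Then ∫_0^∞ (e^{2bx} − 1) u_{xxx} u dx = 3b ∫_0^∞ u_x^2 e^{2bx} dx − 4b^3 ∫_0^∞ u^2 e^{2bx} dx. -/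
open MeasureTheory Real Set Filter Topology

theorem stmt_8 (b : ℝ) (hb : 0 < b) (u u' u'' u''' : ℝ → ℝ)
    (h1 : ∀ x, HasDerivAt u (u' x) x)
    (h2 : ∀ x, HasDerivAt u' (u'' x) x)
    (h3 : ∀ x, HasDerivAt u'' (u''' x) x)
    (hu0 : u 0 = 0)
    (d1 : Tendsto (fun x => u x * u'' x * Real.exp (2*b*x)) atTop (𝓝 0))
    (d2 : Tendsto (fun x => (u' x)^2 * Real.exp (2*b*x)) atTop (𝓝 0))
    (d3 : Tendsto (fun x => u x * u' x * Real.exp (2*b*x)) atTop (𝓝 0))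
    (d4 : Tendsto (fun x => (u x)^2 * Real.exp (2*b*x)) atTop (𝓝 0))
    (i1 : IntegrableOn (fun x => (Real.exp (2*b*x) - 1) * u''' x * u x) (Set.Ioi 0))
    (i2 : IntegrableOn (fun x => (u' x)^2 * Real.exp (2*b*x)) (Set.Ioi 0))
    (i3 : IntegrableOn (fun x => (u x)^2 * Real.exp (2*b*x)) (Set.Ioi 0)) :
    (∫ x in Set.Ioi (0:ℝ), (Real.exp (2*b*x) - 1) * u''' x * u x)
      = 3 * b * (∫ x in Set.Ioi (0:ℝ), (u' x)^2 * Real.exp (2*b*x))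
        - 4 * b^3 * (∫ x in Set.Ioi (0:ℝ), (u x)^2 * Real.exp (2*b*x)) := by
  set F : ℝ → ℝ := fun x =>
    (Real.exp (2*b*x) - 1) * u'' x * u x - (1/2) * (Real.exp (2*b*x) - 1) * (u' x)^2
      - 2*b*Real.exp (2*b*x) * u x * u' x + 2*b^2*Real.exp (2*b*x) * (u x)^2 with hFdef
  set H : ℝ → ℝ := fun x =>
    (Real.exp (2*b*x) - 1) * u''' x * u x - 3*b*((u' x)^2 * Real.exp (2*b*x))
      + 4*b^3*((u x)^2 * Real.exp (2*b*x)) with hHdef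
  have hE : ∀ x : ℝ, HasDerivAt (fun x => Real.exp (2*b*x)) (2*b*Real.exp (2*b*x)) x := by
    intro x
    have := ((hasDerivAt_id x).const_mul (2*b)).exp
    simpa [mul_comm] using this
  -- F is an antiderivative of H
  have hF : ∀ x : ℝ, HasDerivAt F (H x) x := by
    intro x
    have h := ((((((hE x).sub_const 1).mul (h3 x)).mul (h1 x)).sub
        ((((hE x).sub_const 1).const_mul (1/2:ℝ)).mul ((h2 x).pow 2))).sub
        ((((hE x).const_mul (2*b)).mul (h1 x)).mul (h2 x))).add
        (((hE x).const_mul (2*b^2)).mul ((h1 x).pow 2))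
    refine h.congr_deriv ?_
    simp only [hHdef, Pi.mul_apply, Pi.pow_apply]
    ring
  -- F tends to 0 at infinity
  have hexp : Tendsto (fun x : ℝ => Real.exp (-(2*b*x))) atTop (𝓝 0) := by
    apply Real.tendsto_exp_atBot.comp
    apply tendsto_neg_atBot_iff.mpr
    exact (tendsto_id.const_mul_atTop (by positivity)).congr (fun x => rfl)
  have key : ∀ g : ℝ → ℝ, Tendsto (fun x => g x * Real.exp (2*b*x)) atTop (𝓝 0) →
      Tendsto g atTop (𝓝 0) := by
    intro g hg
    have := hg.mul hexp
    simp only [mul_zero] at this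
    refine this.congr (fun x => ?_)
    rw [mul_assoc, ← Real.exp_add]
    simp
  have hFtop : Tendsto F atTop (𝓝 0) := by
    have t1 : Tendsto (fun x => (Real.exp (2*b*x) - 1) * u'' x * u x) atTop (𝓝 0) := by
      have := d1.sub (key _ d1)
      simp only [sub_zero] at this
      refine this.congr (fun x => ?_)
      ring
    have t2 : Tendsto (fun x => (1/2) * (Real.exp (2*b*x) - 1) * (u' x)^2) atTop (𝓝 0) := by
      have := (d2.sub (key _ d2)).const_mul (1/2 : ℝ)
      simp only [sub_zero, mul_zero] at this
      refine this.congr (fun x => ?_)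
      ring
    have t3 : Tendsto (fun x => 2*b*Real.exp (2*b*x) * u x * u' x) atTop (𝓝 0) := by
      have := d3.const_mul (2*b)
      simp only [mul_zero] at this
      refine this.congr (fun x => ?_)
      ring
    have t4 : Tendsto (fun x => 2*b^2*Real.exp (2*b*x) * (u x)^2) atTop (𝓝 0) := by
      have := d4.const_mul (2*b^2)
      simp only [mul_zero] at this
      refine this.congr (fun x => ?_)
      ring
    have := ((t1.sub t2).sub t3).add t4
    simp only [sub_zero, add_zero] at this
    exact this
  -- H is integrable
  have hHint : IntegrableOn H (Set.Ioi 0) := by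
    exact (i1.sub (i2.const_mul (3*b))).add (i3.const_mul (4*b^3))
  -- FTC on [0, ∞)
  have hint : ∫ x in Set.Ioi (0:ℝ), H x = 0 - F 0 :=
    MeasureTheory.integral_Ioi_of_hasDerivAt_of_tendsto
      (hF 0).continuousAt.continuousWithinAt (fun x _ => hF x) hHint hFtop
  have hF0 : F 0 = 0 := by
    simp [hFdef, hu0]
  rw [hF0, sub_zero] at hint
  have hsplit : ∫ x in Set.Ioi (0:ℝ), H x
      = (∫ x in Set.Ioi (0:ℝ), (Real.exp (2*b*x) - 1) * u''' x * u x)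
        - 3*b*(∫ x in Set.Ioi (0:ℝ), (u' x)^2 * Real.exp (2*b*x))
        + 4*b^3*(∫ x in Set.Ioi (0:ℝ), (u x)^2 * Real.exp (2*b*x)) := by
    have isub : IntegrableOn (fun x => (Real.exp (2*b*x) - 1) * u''' x * u x
        - 3*b*((u' x)^2 * Real.exp (2*b*x))) (Set.Ioi 0) := i1.sub (i2.const_mul (3*b))
    rw [hHdef]
    rw [MeasureTheory.integral_add isub (i3.const_mul (4*b^3)),
      MeasureTheory.integral_sub i1 (i2.const_mul (3*b)),
      MeasureTheory.integral_const_mul, MeasureTheory.integral_const_mul]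
  rw [hint] at hsplit
  linarith
end

section
/- Let b > 0 and let u, v : [0,∞) → ℝ be smooth with u(0)=v(0)=0 and sufficient decay at infinity (all products of u,v and their derivatives up to order two times e^{2bx} tend to 0). Then ∫_0^∞ (e^{2bx}−1) u_{xxx} v dx + ∫_0^∞ (e^{2bx}−1) v_{xxx} u dx = −8b^3 ∫_0^∞ u v e^{2bx} dx + 6b ∫_0^∞ u_x v_x e^{2bx} dx. -/
open MeasureTheory Real Set Filter Topology

theorem stmt_10 (b : ℝ) (hb : 0 < b)
    (u u' u'' u''' v v' v'' v''' : ℝ → ℝ)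
    (hu1 : ∀ x, HasDerivAt u (u' x) x)
    (hu2 : ∀ x, HasDerivAt u' (u'' x) x)
    (hu3 : ∀ x, HasDerivAt u'' (u''' x) x)
    (hv1 : ∀ x, HasDerivAt v (v' x) x)
    (hv2 : ∀ x, HasDerivAt v' (v'' x) x)
    (hv3 : ∀ x, HasDerivAt v'' (v''' x) x)
    (hu0 : u 0 = 0) (hv0 : v 0 = 0)
    (d1 : Tendsto (fun x => u x * v'' x * Real.exp (2*b*x)) atTop (𝓝 0))
    (d2 : Tendsto (fun x => v x * u'' x * Real.exp (2*b*x)) atTop (𝓝 0))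
    (d3 : Tendsto (fun x => u' x * v' x * Real.exp (2*b*x)) atTop (𝓝 0))
    (d4 : Tendsto (fun x => u x * v' x * Real.exp (2*b*x)) atTop (𝓝 0))
    (d5 : Tendsto (fun x => v x * u' x * Real.exp (2*b*x)) atTop (𝓝 0))
    (d6 : Tendsto (fun x => u x * v x * Real.exp (2*b*x)) atTop (𝓝 0))
    (i1 : IntegrableOn (fun x => (Real.exp (2*b*x) - 1) * u''' x * v x) (Set.Ioi 0))
    (i2 : IntegrableOn (fun x => (Real.exp (2*b*x) - 1) * v''' x * u x) (Set.Ioi 0))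
    (i3 : IntegrableOn (fun x => u x * v x * Real.exp (2*b*x)) (Set.Ioi 0))
    (i4 : IntegrableOn (fun x => u' x * v' x * Real.exp (2*b*x)) (Set.Ioi 0)) :
    (∫ x in Set.Ioi (0:ℝ), (Real.exp (2*b*x) - 1) * u''' x * v x)
      + (∫ x in Set.Ioi (0:ℝ), (Real.exp (2*b*x) - 1) * v''' x * u x)
      = -8 * b^3 * (∫ x in Set.Ioi (0:ℝ), u x * v x * Real.exp (2*b*x))
        + 6 * b * (∫ x in Set.Ioi (0:ℝ), u' x * v' x * Real.exp (2*b*x)) := by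
  set F : ℝ → ℝ := fun x =>
    (Real.exp (2*b*x) - 1) * (u'' x * v x + u x * v'' x - u' x * v' x)
      - 2*b*(Real.exp (2*b*x) * (u' x * v x + u x * v' x))
      + 4*b^2*(Real.exp (2*b*x) * (u x * v x)) with hF
  set g : ℝ → ℝ := fun x =>
    (Real.exp (2*b*x) - 1) * u''' x * v x + (Real.exp (2*b*x) - 1) * v''' x * u x
      + 8 * b^3 * (u x * v x * Real.exp (2*b*x))
      - 6 * b * (u' x * v' x * Real.exp (2*b*x)) with hg
  have hexp : ∀ x : ℝ, HasDerivAt (fun x => Real.exp (2*b*x)) (2*b*Real.exp (2*b*x)) x := by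
    intro x
    have : HasDerivAt (fun x : ℝ => 2*b*x) (2*b) x := by
      simpa using (hasDerivAt_id x).const_mul (2*b)
    simpa [mul_comm] using this.exp
  have hFd : ∀ x : ℝ, HasDerivAt F (g x) x := by
    intro x
    have h1 : HasDerivAt (fun x => (Real.exp (2*b*x) - 1) *
        (u'' x * v x + u x * v'' x - u' x * v' x))
        ((2*b*Real.exp (2*b*x)) * (u'' x * v x + u x * v'' x - u' x * v' x)
          + (Real.exp (2*b*x) - 1) *
            ((u''' x * v x + u'' x * v' x) + (u' x * v'' x + u x * v''' x)
              - (u'' x * v' x + u' x * v'' x))) x := by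
      exact ((hexp x).sub_const 1).mul
        ((((hu3 x).mul (hv1 x)).add ((hu1 x).mul (hv3 x))).sub ((hu2 x).mul (hv2 x)))
    have h2 : HasDerivAt (fun x => 2*b*(Real.exp (2*b*x) * (u' x * v x + u x * v' x)))
        (2*b*((2*b*Real.exp (2*b*x)) * (u' x * v x + u x * v' x)
          + Real.exp (2*b*x) * ((u'' x * v x + u' x * v' x) + (u' x * v' x + u x * v'' x)))) x :=
      ((hexp x).mul (((hu2 x).mul (hv1 x)).add ((hu1 x).mul (hv2 x)))).const_mul (2*b)
    have h3 : HasDerivAt (fun x => 4*b^2*(Real.exp (2*b*x) * (u x * v x)))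
        (4*b^2*((2*b*Real.exp (2*b*x)) * (u x * v x)
          + Real.exp (2*b*x) * (u' x * v x + u x * v' x))) x :=
      ((hexp x).mul (((hu1 x).mul (hv1 x)))).const_mul (4*b^2)
    have := (h1.sub h2).add h3
    refine this.congr_deriv ?_
    simp only [hg]
    ring
  have hcont : ContinuousWithinAt F (Ici 0) 0 := (hFd 0).continuousAt.continuousWithinAt
  have hgint : IntegrableOn g (Ioi 0) := by
    exact ((i1.add i2).add (i3.const_mul (8*b^3))).sub (i4.const_mul (6*b))
  have hdecay : Tendsto (fun x : ℝ => Real.exp (-(2*b*x))) atTop (𝓝 0) := by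
    have : Tendsto (fun x : ℝ => 2*b*x) atTop atTop :=
      Tendsto.const_mul_atTop (by positivity) tendsto_id
    exact Real.tendsto_exp_neg_atTop_nhds_zero.comp this
  -- F tends to 0 at infinity
  have hFlim : Tendsto F atTop (𝓝 0) := by
    have key : ∀ (f : ℝ → ℝ), Tendsto (fun x => f x * Real.exp (2*b*x)) atTop (𝓝 0) →
        Tendsto f atTop (𝓝 0) := by
      intro f hf
      have := hf.mul hdecay
      simp only [mul_zero] at this
      refine this.congr fun x => ?_
      rw [mul_assoc, ← Real.exp_add]
      simp
    have e1 := key _ d1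
    have e2 := key _ d2
    have e3 := key _ d3
    have hFeq : F = fun x =>
        (v x * u'' x * Real.exp (2*b*x) + u x * v'' x * Real.exp (2*b*x)
          - u' x * v' x * Real.exp (2*b*x))
        - (v x * u'' x + u x * v'' x - u' x * v' x)
        - 2*b*(v x * u' x * Real.exp (2*b*x)) - 2*b*(u x * v' x * Real.exp (2*b*x))
        + 4*b^2*(u x * v x * Real.exp (2*b*x)) := by
      funext x; simp only [hF]; ring
    rw [hFeq]
    have : Tendsto (fun x =>
        (v x * u'' x * Real.exp (2*b*x) + u x * v'' x * Real.exp (2*b*x)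
          - u' x * v' x * Real.exp (2*b*x))
        - (v x * u'' x + u x * v'' x - u' x * v' x)
        - 2*b*(v x * u' x * Real.exp (2*b*x)) - 2*b*(u x * v' x * Real.exp (2*b*x))
        + 4*b^2*(u x * v x * Real.exp (2*b*x))) atTop
        (𝓝 ((0 + 0 - 0) - (0 + 0 - 0) - 2*b*0 - 2*b*0 + 4*b^2*0)) := by
      exact (((((d2.add d1).sub d3).sub ((e2.add e1).sub e3)).sub (d5.const_mul (2*b))).sub
        (d4.const_mul (2*b))).add (d6.const_mul (4*b^2))
    simpa using this
  have hint : ∫ x in Ioi (0:ℝ), g x = 0 - F 0 :=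
    integral_Ioi_of_hasDerivAt_of_tendsto hcont (fun x _ => hFd x) hgint hFlim
  have hF0 : F 0 = 0 := by simp [hF, hu0, hv0]
  rw [hF0, sub_zero] at hint
  have hsplit : ∫ x in Ioi (0:ℝ), g x =
      (∫ x in Set.Ioi (0:ℝ), (Real.exp (2*b*x) - 1) * u''' x * v x)
      + (∫ x in Set.Ioi (0:ℝ), (Real.exp (2*b*x) - 1) * v''' x * u x)
      + 8 * b^3 * (∫ x in Set.Ioi (0:ℝ), u x * v x * Real.exp (2*b*x))
      - 6 * b * (∫ x in Set.Ioi (0:ℝ), u' x * v' x * Real.exp (2*b*x)) := by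
    have j3 : IntegrableOn (fun x => 8*b^3 * (u x * v x * Real.exp (2*b*x))) (Ioi 0) :=
      i3.const_mul _
    have j4 : IntegrableOn (fun x => 6*b * (u' x * v' x * Real.exp (2*b*x))) (Ioi 0) :=
      i4.const_mul _
    have j12 : IntegrableOn (fun x => (Real.exp (2*b*x) - 1) * u''' x * v x
        + (Real.exp (2*b*x) - 1) * v''' x * u x) (Ioi 0) := i1.add i2
    have j123 : IntegrableOn (fun x => ((Real.exp (2*b*x) - 1) * u''' x * v x
        + (Real.exp (2*b*x) - 1) * v''' x * u x) + 8*b^3 * (u x * v x * Real.exp (2*b*x)))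
        (Ioi 0) := j12.add j3
    simp only [hg]
    rw [integral_sub j123 j4, integral_add j12 j3, integral_add i1 i2,
      integral_const_mul, integral_const_mul]
  rw [hsplit] at hint
  linarith
end
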